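/- Let m₀, m₁ ≥ 1 be integers, n = m₀ + m₁, let x₁,…,xₙ > 0 be real numbers and t ∈ [0,1). Consider the single-species t-PushTASEP on a ring of n sites: its state space is the set of η ∈ {0,1}ⁿ with exactly m₁ entries equal to 1, and for sites k, j with η_k = 1 and η_j = 0 it jumps from η to the configuration obtained from η by setting position k to 0 and position j to 1, at rate r(η → ·) = (1/x_k)·t^a/[m₀]_t, where a is the number of positions i with η_i = 0 lying strictly between k and j in clockwise cyclic order (i.e., among the cyclic positions k+1,…,j−1); all other transition rates are 0. Then π(η) := (∏_{i : η_i = 1} x_i)/e_{m₁}(x₁,…,xₙ) defines a probability distribution (Σ_η π(η) = 1) satisfying the global balance equations: for every state η, Σ_{τ ≠ η} π(τ)·r(τ → η) = π(η)·Σ_{τ ≠ η} r(η → τ); that is, π is a stationary distribution of the single-species t-PushTASEP. -/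

import Mathlib

/-- The elementary symmetric polynomial `e_d` evaluated on the list of reals `l`,
with the convention `e_0 = 1` and `e_d = 0` when `d` exceeds the number of variables. -/
def esymR (l : List ℝ) (d : ℕ) : ℝ := ((l.sublistsLen d).map List.prod).sum

/-- The `t`-analogue `[m]_t = 1 + t + ⋯ + t^{m-1}`. -/
def tnum (t : ℝ) (m : ℕ) : ℝ := ∑ i ∈ Finset.range m, t ^ i

/-- The set of sites of `{1,…,n}` lying strictly between `k` and `j` in clockwise
cyclic order, i.e. the cyclic positions `k+1, …, j-1`. -/
def cycBetween (n k j : ℕ) : Finset ℕ :=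
  if k < j then Finset.Ioo k j else Finset.Icc (k + 1) n ∪ Finset.Ico 1 j

/-- The state space of the single-species `t`-PushTASEP: configurations `η ∈ {0,1}ⁿ`
with exactly `m₁` ones, encoded by the set of occupied sites. -/
def states (n m₁ : ℕ) : Finset (Finset ℕ) :=
  (Finset.Icc 1 n).powerset.filter (fun S => S.card = m₁)

/-- The jump rate of the single-species `t`-PushTASEP from configuration `S` to
configuration `T`: a particle at `k ∈ S` jumps to a vacant site `j ∉ S`, producing
`T = (S ∖ {k}) ∪ {j}`, at rate `(1/x_k)·t^a/[m₀]_t` where `a` is the number of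
vacancies strictly between `k` and `j` in clockwise cyclic order; all other rates
vanish. -/
noncomputable def rate1 (n m₀ : ℕ) (x : ℕ → ℝ) (t : ℝ) (S T : Finset ℕ) : ℝ :=
  ∑ k ∈ S, ∑ j ∈ Finset.Icc 1 n \ S,
    if T = insert j (S.erase k) then
      (1 / x k) * t ^ (((cycBetween n k j).filter (fun i => i ∉ S)).card) / tnum t m₀
    else 0

/-- The stationary probability `π(S) = (∏_{i∈S} x_i)/e_{m₁}(x₁,…,xₙ)`. -/
noncomputable def piDist (n m₁ : ℕ) (x : ℕ → ℝ) (S : Finset ℕ) : ℝ :=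
  (∏ i ∈ S, x i) / esymR ((List.range' 1 n).map x) m₁

/- ### Auxiliary material -/

lemma esymR_eq_sum (n d : ℕ) (x : ℕ → ℝ) :
    esymR ((List.range' 1 n).map x) d
      = ∑ T ∈ (Finset.Icc 1 n).powersetCard d, ∏ i ∈ T, x i := by
  have h1 : ((List.range' 1 n).map x : Multiset ℝ) = (Finset.Icc 1 n).val.map x := by
    rw [Nat.Icc_eq_range']; simp
  have h2 : ∀ (l : List ℝ) (d : ℕ), esymR l d = Multiset.esymm (↑l) d := by
    intro l d
    simp [esymR, Multiset.esymm, Multiset.powersetCard_coe, Multiset.map_coe,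
      List.map_map, Function.comp_def]
  rw [h2, h1, Finset.esymm_map_val]
  try rfl

lemma states_eq (n m₁ : ℕ) : states n m₁ = (Finset.Icc 1 n).powersetCard m₁ := by
  rw [states, Finset.powersetCard_eq_filter]

/-- The position of `i` in clockwise order starting just after `p`. -/
def sigmaPos (n p i : ℕ) : ℕ := if p < i then i - p else i + n - p

lemma sigmaPos_bounds {n p i : ℕ} (hp : p ∈ Finset.Icc 1 n) (hi : i ∈ Finset.Icc 1 n) :
    1 ≤ sigmaPos n p i ∧ sigmaPos n p i ≤ n := by
  simp only [Finset.mem_Icc] at hp hi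
  unfold sigmaPos; split_ifs <;> omega

lemma sigmaPos_inj {n p i j : ℕ} (hp : p ∈ Finset.Icc 1 n) (hi : i ∈ Finset.Icc 1 n)
    (hj : j ∈ Finset.Icc 1 n) (h : sigmaPos n p i = sigmaPos n p j) : i = j := by
  simp only [Finset.mem_Icc] at hp hi hj
  unfold sigmaPos at h; split_ifs at h <;> omega

lemma cycBetween_subset {n k j : ℕ} (hk : k ∈ Finset.Icc 1 n) (hj : j ∈ Finset.Icc 1 n) :
    cycBetween n k j ⊆ Finset.Icc 1 n := by
  simp only [Finset.mem_Icc] at hk hj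
  intro i hi
  simp only [cycBetween] at hi
  split_ifs at hi <;>
    simp only [Finset.mem_Ioo, Finset.mem_union, Finset.mem_Icc, Finset.mem_Ico] at hi <;>
    simp only [Finset.mem_Icc] <;> omega

lemma not_mem_cycBetween_self {n k j : ℕ} : k ∉ cycBetween n k j := by
  simp only [cycBetween]
  split_ifs <;>
    simp only [Finset.mem_Ioo, Finset.mem_union, Finset.mem_Icc, Finset.mem_Ico] <;> omega

lemma mem_cycBetween_iff_left {n k j i : ℕ} (hk : k ∈ Finset.Icc 1 n)
    (hj : j ∈ Finset.Icc 1 n) (hkj : j ≠ k) (hi : i ∈ Finset.Icc 1 n) :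
    i ∈ cycBetween n k j ↔ sigmaPos n k i < sigmaPos n k j := by
  simp only [Finset.mem_Icc] at hk hj hi
  simp only [cycBetween, sigmaPos]
  split_ifs <;>
    simp only [Finset.mem_Ioo, Finset.mem_union, Finset.mem_Icc, Finset.mem_Ico] <;> omega

lemma mem_cycBetween_iff_right {n k j i : ℕ} (hk : k ∈ Finset.Icc 1 n)
    (hj : j ∈ Finset.Icc 1 n) (hkj : j ≠ k) (hi : i ∈ Finset.Icc 1 n) :
    i ∈ cycBetween n k j ↔ (sigmaPos n j k < sigmaPos n j i ∧ i ≠ j) := by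
  simp only [Finset.mem_Icc] at hk hj hi
  simp only [cycBetween, sigmaPos]
  split_ifs <;>
    simp only [Finset.mem_Ioo, Finset.mem_union, Finset.mem_Icc, Finset.mem_Ico] <;> omega

/-- Rank bijection: summing `t^{rank v}` over `v ∈ V` gives `[|V|]_t`. -/
lemma rank_sum (V : Finset ℕ) (f : ℕ → ℕ)
    (hf : ∀ a ∈ V, ∀ b ∈ V, f a = f b → a = b) (t : ℝ) :
    ∑ v ∈ V, t ^ (V.filter (fun w => f w < f v)).card
      = ∑ r ∈ Finset.range V.card, t ^ r := by
  set g : ℕ → ℕ := fun v => (V.filter (fun w => f w < f v)).card with hg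
  have hmono : ∀ a ∈ V, ∀ b ∈ V, f a < f b → g a < g b := by
    intro a ha b hb hab
    apply Finset.card_lt_card
    constructor
    · intro w hw
      simp only [Finset.mem_filter] at hw ⊢
      exact ⟨hw.1, hw.2.trans hab⟩
    · intro hsub
      have : a ∈ V.filter (fun w => f w < f b) := by
        simp only [Finset.mem_filter]; exact ⟨ha, hab⟩
      have := hsub this
      simp only [Finset.mem_filter] at this
      omega
  have hinj : ∀ a ∈ V, ∀ b ∈ V, g a = g b → a = b := by
    intro a ha b hb hab
    by_contra hne
    have hfne : f a ≠ f b := fun h => hne (hf a ha b hb h)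
    rcases lt_or_gt_of_ne hfne with h | h
    · exact absurd hab (by have := hmono a ha b hb h; omega)
    · exact absurd hab (by have := hmono b hb a ha h; omega)
  have hlt : ∀ a ∈ V, g a < V.card := by
    intro a ha
    have : V.filter (fun w => f w < f a) ⊆ V.erase a := by
      intro w hw
      simp only [Finset.mem_filter] at hw
      exact Finset.mem_erase.2 ⟨fun h => by subst h; omega, hw.1⟩
    calc g a ≤ (V.erase a).card := Finset.card_le_card this
      _ < V.card := by
          rw [Finset.card_erase_of_mem ha]
          have : 0 < V.card := Finset.card_pos.2 ⟨a, ha⟩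
          omega
  have himg : V.image g = Finset.range V.card := by
    apply Finset.eq_of_subset_of_card_le
    · intro r hr
      simp only [Finset.mem_image] at hr
      obtain ⟨a, ha, rfl⟩ := hr
      exact Finset.mem_range.2 (hlt a ha)
    · rw [Finset.card_range, Finset.card_image_of_injOn hinj]
  calc ∑ v ∈ V, t ^ g v = ∑ r ∈ V.image g, t ^ r :=
        (Finset.sum_image (fun a ha b hb h => hinj a ha b hb h)).symm
    _ = ∑ r ∈ Finset.range V.card, t ^ r := by rw [himg]

/-- Membership facts for states. -/
lemma mem_states_iff {n m₁ : ℕ} {S : Finset ℕ} :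
    S ∈ states n m₁ ↔ S ⊆ Finset.Icc 1 n ∧ S.card = m₁ := by
  simp [states, Finset.mem_filter, Finset.mem_powerset]

/-- The swap lemma: if `S = insert j (T.erase k)` with `k ∈ T`, `j ∉ T`, then
`j ∈ S`, `k ∉ S`, and `T = insert k (S.erase j)`. -/
lemma swap_lemma {S T : Finset ℕ} {k j : ℕ} (hk : k ∈ T) (hj : j ∉ T)
    (hS : S = insert j (T.erase k)) :
    j ∈ S ∧ k ∉ S ∧ T = insert k (S.erase j) := by
  have hkj : k ≠ j := fun h => hj (h ▸ hk)
  have hjS : j ∈ S := hS ▸ Finset.mem_insert_self _ _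
  have hkS : k ∉ S := by
    rw [hS]
    simp only [Finset.mem_insert, Finset.mem_erase]
    push_neg
    exact ⟨hkj, fun h => absurd rfl h⟩
  refine ⟨hjS, hkS, ?_⟩
  have hje : j ∉ T.erase k := fun h => hj (Finset.mem_of_mem_erase h)
  have : S.erase j = T.erase k := by rw [hS, Finset.erase_insert hje]
  rw [this, Finset.insert_erase hk]

theorem stmt_2 (m₀ m₁ n : ℕ) (hm₀ : 1 ≤ m₀) (hm₁ : 1 ≤ m₁) (hn : n = m₀ + m₁)
    (x : ℕ → ℝ) (hx : ∀ i ∈ Finset.Icc 1 n, 0 < x i)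
    (t : ℝ) (ht0 : 0 ≤ t) (ht1 : t < 1) :
    (∑ S ∈ states n m₁, piDist n m₁ x S = 1) ∧
    ∀ S ∈ states n m₁,
      ∑ T ∈ (states n m₁).erase S, piDist n m₁ x T * rate1 n m₀ x t T S
        = piDist n m₁ x S * ∑ T ∈ (states n m₁).erase S, rate1 n m₀ x t S T := by
  have hxne : ∀ i ∈ Finset.Icc 1 n, x i ≠ 0 := fun i hi => ne_of_gt (hx i hi)
  have hcardIcc : (Finset.Icc 1 n).card = n := by rw [Nat.card_Icc]; omega
  -- positivity of the normalizing constant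
  have hE : esymR ((List.range' 1 n).map x) m₁ = ∑ T ∈ states n m₁, ∏ i ∈ T, x i := by
    rw [esymR_eq_sum, states_eq]
  have hEpos : 0 < esymR ((List.range' 1 n).map x) m₁ := by
    rw [hE]
    obtain ⟨T, hTsub, hTcard⟩ := Finset.exists_subset_card_eq
      (show m₁ ≤ (Finset.Icc 1 n).card by omega)
    apply Finset.sum_pos'
    · intro T' hT'
      obtain ⟨hsub, _⟩ := mem_states_iff.mp hT'
      exact le_of_lt (Finset.prod_pos fun i hi => hx i (hsub hi))
    · refine ⟨T, mem_states_iff.mpr ⟨hTsub, hTcard⟩, ?_⟩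
      exact Finset.prod_pos fun i hi => hx i (hTsub hi)
  have hEne : esymR ((List.range' 1 n).map x) m₁ ≠ 0 := ne_of_gt hEpos
  have htnum : 0 < tnum t m₀ := by
    apply Finset.sum_pos'
    · exact fun i _ => pow_nonneg ht0 i
    · exact ⟨0, Finset.mem_range.2 (by omega), by norm_num⟩
  have htne : tnum t m₀ ≠ 0 := ne_of_gt htnum
  constructor
  · -- normalization
    unfold piDist
    rw [← Finset.sum_div, ← hE, div_self hEne]
  · -- global balance
    intro S hS
    obtain ⟨hSsub, hScard⟩ := mem_states_iff.mp hS
    set V : Finset ℕ := Finset.Icc 1 n \ S with hVdef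
    have hVcard : V.card = m₀ := by
      rw [hVdef, Finset.card_sdiff_of_subset hSsub, hcardIcc, hScard]; omega
    have hVmem : ∀ k ∈ V, k ∈ Finset.Icc 1 n ∧ k ∉ S := fun k hk => Finset.mem_sdiff.mp hk
    -- the right-hand side: total outflow rate
    have hRHS : ∑ T ∈ (states n m₁).erase S, rate1 n m₀ x t S T = ∑ k ∈ S, 1 / x k := by
      unfold rate1
      rw [Finset.sum_comm]
      refine Finset.sum_congr rfl fun k hk => ?_
      have hkIcc : k ∈ Finset.Icc 1 n := hSsub hk
      rw [Finset.sum_comm]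
      have hstep : ∀ j ∈ V,
          (∑ T ∈ (states n m₁).erase S, if T = insert j (S.erase k) then
            (1 / x k) * t ^ (((cycBetween n k j).filter (fun i => i ∉ S)).card) / tnum t m₀
          else 0)
          = (1 / x k) * t ^ ((V.filter (fun w => sigmaPos n k w < sigmaPos n k j)).card)
              / tnum t m₀ := by
        intro j hj
        obtain ⟨hjIcc, hjS⟩ := hVmem j hj
        have hjk : j ≠ k := fun h => hjS (h ▸ hk)
        have hjne : j ∉ S.erase k := fun h => hjS (Finset.mem_of_mem_erase h)
        have hmem : insert j (S.erase k) ∈ (states n m₁).erase S := by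
          rw [Finset.mem_erase]
          constructor
          · intro h
            exact hjS (h ▸ Finset.mem_insert_self j (S.erase k))
          · rw [mem_states_iff]
            constructor
            · intro i hi
              rcases Finset.mem_insert.mp hi with rfl | hi
              · exact hjIcc
              · exact hSsub (Finset.mem_of_mem_erase hi)
            · rw [Finset.card_insert_of_notMem hjne, Finset.card_erase_of_mem hk, hScard]
              omega
        rw [Finset.sum_ite_eq' ((states n m₁).erase S) (insert j (S.erase k)), if_pos hmem]
        have hfil : (cycBetween n k j).filter (fun i => i ∉ S)
            = V.filter (fun w => sigmaPos n k w < sigmaPos n k j) := by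
          ext i
          simp only [Finset.mem_filter, hVdef, Finset.mem_sdiff]
          constructor
          · intro ⟨hic, hiS⟩
            have hiIcc : i ∈ Finset.Icc 1 n := cycBetween_subset hkIcc hjIcc hic
            exact ⟨⟨hiIcc, hiS⟩, (mem_cycBetween_iff_left hkIcc hjIcc hjk hiIcc).mp hic⟩
          · intro ⟨⟨hiIcc, hiS⟩, hsig⟩
            exact ⟨(mem_cycBetween_iff_left hkIcc hjIcc hjk hiIcc).mpr hsig, hiS⟩
        rw [hfil]
      rw [Finset.sum_congr rfl hstep]
      have hrank : ∑ j ∈ V, t ^ ((V.filter (fun w => sigmaPos n k w < sigmaPos n k j)).card)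
          = tnum t m₀ := by
        rw [rank_sum V (sigmaPos n k)
          (fun a ha b hb h => sigmaPos_inj hkIcc (hVmem a ha).1 (hVmem b hb).1 h), hVcard]
        rfl
      rw [← Finset.sum_div, ← Finset.mul_sum, hrank, mul_div_assoc, div_self htne, mul_one]
    -- the left-hand side: total inflow rate
    have hLHS : ∑ T ∈ (states n m₁).erase S, piDist n m₁ x T * rate1 n m₀ x t T S
        = ∑ j ∈ S, piDist n m₁ x S / x j := by
      classical
      set φ : ℕ × ℕ → Finset ℕ := fun p => insert p.2 (S.erase p.1) with hφdef
      -- basic facts about φ p for p ∈ S ×ˢ V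
      have hφfacts : ∀ p ∈ S ×ˢ V, φ p ∈ (states n m₁).erase S ∧ p.2 ∈ φ p ∧
          p.1 ∈ Finset.Icc 1 n \ φ p ∧ S = insert p.1 ((φ p).erase p.2) := by
        rintro ⟨j, k⟩ hp
        rw [Finset.mem_product] at hp
        obtain ⟨hjS, hkV⟩ := hp
        obtain ⟨hkIcc, hkS⟩ := hVmem k hkV
        have hjIcc : j ∈ Finset.Icc 1 n := hSsub hjS
        have hkj : k ≠ j := fun h => hkS (h ▸ hjS)
        have hkne : k ∉ S.erase j := fun h => hkS (Finset.mem_of_mem_erase h)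
        have hjT : j ∉ φ (j, k) := by
          simp only [hφdef, Finset.mem_insert, Finset.mem_erase]
          push_neg
          exact ⟨fun h => hkj h.symm, fun h => absurd rfl h⟩
        have hST : S = insert j ((φ (j, k)).erase k) := by
          simp only [hφdef]
          rw [Finset.erase_insert hkne, Finset.insert_erase hjS]
        refine ⟨?_, Finset.mem_insert_self _ _, Finset.mem_sdiff.mpr ⟨hjIcc, hjT⟩, hST⟩
        rw [Finset.mem_erase]
        constructor
        · intro h
          exact hkS (h ▸ Finset.mem_insert_self k (S.erase j))
        · rw [mem_states_iff]
          constructor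
          · intro i hi
            rcases Finset.mem_insert.mp hi with rfl | hi
            · exact hkIcc
            · exact hSsub (Finset.mem_of_mem_erase hi)
          · rw [Finset.card_insert_of_notMem hkne, Finset.card_erase_of_mem hjS, hScard]
            omega
      -- identify the preimage data from a transition into S
      have hkey : ∀ (T : Finset ℕ), T ∈ states n m₁ → ∀ k' ∈ T, ∀ j' ∈ Finset.Icc 1 n \ T,
          S = insert j' (T.erase k') → (j', k') ∈ S ×ˢ V ∧ T = φ (j', k') := by
        intro T hT k' hk' j' hj' hseq
        obtain ⟨hj'Icc, hj'T⟩ := Finset.mem_sdiff.mp hj'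
        obtain ⟨hj'S, hk'S, hTeq⟩ := swap_lemma hk' hj'T hseq
        have hk'Icc : k' ∈ Finset.Icc 1 n := (mem_states_iff.mp hT).1 hk'
        exact ⟨Finset.mem_product.mpr ⟨hj'S, Finset.mem_sdiff.mpr ⟨hk'Icc, hk'S⟩⟩, hTeq⟩
      -- restrict the sum to the image of φ
      have himage : ∑ T ∈ (states n m₁).erase S, piDist n m₁ x T * rate1 n m₀ x t T S
          = ∑ T ∈ (S ×ˢ V).image φ, piDist n m₁ x T * rate1 n m₀ x t T S := by
        symm
        apply Finset.sum_subset
        · intro T hT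
          obtain ⟨p, hp, rfl⟩ := Finset.mem_image.mp hT
          exact (hφfacts p hp).1
        · intro T hT hTim
          have hTst : T ∈ states n m₁ := Finset.mem_of_mem_erase hT
          have : rate1 n m₀ x t T S = 0 := by
            unfold rate1
            apply Finset.sum_eq_zero
            intro k' hk'
            apply Finset.sum_eq_zero
            intro j' hj'
            rw [if_neg]
            intro hseq
            obtain ⟨hpmem, hTeq⟩ := hkey T hTst k' hk' j' hj' hseq
            exact hTim (Finset.mem_image.mpr ⟨(j', k'), hpmem, hTeq.symm⟩)
          rw [this, mul_zero]
      -- φ is injective on S ×ˢ V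
      have hinj : ∀ p ∈ S ×ˢ V, ∀ q ∈ S ×ˢ V, φ p = φ q → p = q := by
        rintro ⟨j, k⟩ hp ⟨j', k'⟩ hq h
        rw [Finset.mem_product] at hp hq
        obtain ⟨hjS, hkV⟩ := hp
        obtain ⟨hj'S, hk'V⟩ := hq
        have hkS := (hVmem k hkV).2
        have hk'S := (hVmem k' hk'V).2
        simp only [hφdef] at h
        have hkk' : k = k' := by
          have : k ∈ insert k' (S.erase j') := h ▸ Finset.mem_insert_self k (S.erase j)
          rcases Finset.mem_insert.mp this with h' | h'
          · exact h'
          · exact absurd (Finset.mem_of_mem_erase h') hkS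
        subst hkk'
        have hknj : k ∉ S.erase j := fun hh => hkS (Finset.mem_of_mem_erase hh)
        have hknj' : k ∉ S.erase j' := fun hh => hkS (Finset.mem_of_mem_erase hh)
        have herase : S.erase j = S.erase j' := by
          have := congrArg (fun A => Finset.erase A k) h
          simpa [Finset.erase_insert hknj, Finset.erase_insert hknj'] using this
        have : j = j' := by
          by_contra hne
          have : j ∈ S.erase j' := Finset.mem_erase.mpr ⟨hne, hjS⟩
          rw [← herase] at this
          exact absurd rfl (Finset.mem_erase.mp this).1
        simp [this]
      rw [himage, Finset.sum_image hinj, Finset.sum_product]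
      refine Finset.sum_congr rfl fun j hjS => ?_
      -- inner sum over vacancies k
      have hterm : ∀ k ∈ V, piDist n m₁ x (φ (j, k)) * rate1 n m₀ x t (φ (j, k)) S
          = piDist n m₁ x S / x j *
            (t ^ ((V.filter (fun w => (n - sigmaPos n j w) < (n - sigmaPos n j k))).card)
              / tnum t m₀) := by
        intro k hkV
        have hpmem : (j, k) ∈ S ×ˢ V := Finset.mem_product.mpr ⟨hjS, hkV⟩
        obtain ⟨hTst, hkT, hjsd, hSeq⟩ := hφfacts (j, k) hpmem
        obtain ⟨hkIcc, hkS⟩ := hVmem k hkV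
        have hjIcc : j ∈ Finset.Icc 1 n := hSsub hjS
        have hkj : k ≠ j := fun h => hkS (h ▸ hjS)
        have hknj : k ∉ S.erase j := fun hh => hkS (Finset.mem_of_mem_erase hh)
        set T : Finset ℕ := φ (j, k) with hTdef
        have hTeq : T = insert k (S.erase j) := rfl
        have hTstates : T ∈ states n m₁ := Finset.mem_of_mem_erase hTst
        -- compute the rate from T to S: only the term (k, j) survives
        have hrate : rate1 n m₀ x t T S
            = (1 / x k) * t ^ (((cycBetween n k j).filter (fun i => i ∉ T)).card)
                / tnum t m₀ := by
          unfold rate1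
          rw [Finset.sum_eq_single_of_mem k hkT]
          · rw [Finset.sum_eq_single_of_mem j hjsd]
            · rw [if_pos hSeq]
            · intro j' hj' hne
              rw [if_neg]
              intro hseq
              obtain ⟨hpmem', hTeq'⟩ := hkey T hTstates k hkT j' hj' hseq
              have hj'S : j' ∈ S := (Finset.mem_product.mp hpmem').1
              have hj'T : j' ∉ T := (Finset.mem_sdiff.mp hj').2
              apply hj'T
              rw [hTeq]
              rcases Finset.mem_erase.mp (Finset.mem_erase.mpr ⟨hne, hj'S⟩) with _
              exact Finset.mem_insert.mpr (Or.inr (Finset.mem_erase.mpr ⟨hne, hj'S⟩))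
          · intro k' hk' hne
            apply Finset.sum_eq_zero
            intro j' hj'
            rw [if_neg]
            intro hseq
            obtain ⟨hpmem', hTeq'⟩ := hkey T hTstates k' hk' j' hj' hseq
            have hk'S : k' ∉ S := (Finset.mem_sdiff.mp (Finset.mem_product.mp hpmem').2).2
            apply hne
            have : k' ∈ insert k (S.erase j) := hTeq ▸ hk'
            rcases Finset.mem_insert.mp this with h' | h'
            · exact h'
            · exact absurd (Finset.mem_of_mem_erase h') hk'S
        -- rewrite the vacancy count
        have hfilter : (cycBetween n k j).filter (fun i => i ∉ T)
            = V.filter (fun w => (n - sigmaPos n j w) < (n - sigmaPos n j k)) := by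
          ext i
          simp only [Finset.mem_filter, hVdef, Finset.mem_sdiff]
          constructor
          · intro ⟨hic, hiT⟩
            have hiIcc : i ∈ Finset.Icc 1 n := cycBetween_subset hkIcc hjIcc hic
            obtain ⟨hsig, hij⟩ :=
              (mem_cycBetween_iff_right hkIcc hjIcc (Ne.symm hkj) hiIcc).mp hic
            have hiS : i ∉ S := by
              intro hiS
              apply hiT
              rw [hTeq]
              exact Finset.mem_insert.mpr (Or.inr (Finset.mem_erase.mpr ⟨hij, hiS⟩))
            have hbi := sigmaPos_bounds hjIcc hiIcc
            have hbk := sigmaPos_bounds hjIcc hkIcc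
            exact ⟨⟨hiIcc, hiS⟩, by omega⟩
          · intro ⟨⟨hiIcc, hiS⟩, hlt⟩
            have hbi := sigmaPos_bounds hjIcc hiIcc
            have hbk := sigmaPos_bounds hjIcc hkIcc
            have hij : i ≠ j := fun h => hiS (h ▸ hjS)
            have hic : i ∈ cycBetween n k j :=
              (mem_cycBetween_iff_right hkIcc hjIcc (Ne.symm hkj) hiIcc).mpr ⟨by omega, hij⟩
            have hik : i ≠ k := fun h => not_mem_cycBetween_self (h ▸ hic)
            refine ⟨hic, ?_⟩
            rw [hTeq]
            simp only [Finset.mem_insert, Finset.mem_erase]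
            push_neg
            exact ⟨hik, fun _ => hiS⟩
        -- now assemble the scalar identity
        have hprodT : ∏ i ∈ T, x i = x k * ∏ i ∈ S.erase j, x i := by
          rw [hTeq, Finset.prod_insert hknj]
        have hprodS : ∏ i ∈ S, x i = x j * ∏ i ∈ S.erase j, x i :=
          (Finset.mul_prod_erase S x hjS).symm
        rw [hrate, hfilter]
        unfold piDist
        rw [hprodT, hprodS]
        have hxk := hxne k hkIcc
        have hxj := hxne j hjIcc
        linear_combination (∏ i ∈ S.erase j, x i) / esymR ((List.range' 1 n).map x) m₁ *
          t ^ ((V.filter (fun w => (n - sigmaPos n j w) < (n - sigmaPos n j k))).card) /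
          tnum t m₀ * (mul_inv_cancel₀ hxk) - (∏ i ∈ S.erase j, x i) /
          esymR ((List.range' 1 n).map x) m₁ *
          t ^ ((V.filter (fun w => (n - sigmaPos n j w) < (n - sigmaPos n j k))).card) /
          tnum t m₀ * (mul_inv_cancel₀ hxj)
      rw [Finset.sum_congr rfl hterm]
      have hrank : ∑ k ∈ V,
          t ^ ((V.filter (fun w => (n - sigmaPos n j w) < (n - sigmaPos n j k))).card)
          = tnum t m₀ := by
        have hjIcc : j ∈ Finset.Icc 1 n := hSsub hjS
        rw [rank_sum V (fun i => n - sigmaPos n j i) ?_, hVcard]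
        · rfl
        · intro a ha b hb h
          have h' : n - sigmaPos n j a = n - sigmaPos n j b := h
          have hba := sigmaPos_bounds hjIcc (hVmem a ha).1
          have hbb := sigmaPos_bounds hjIcc (hVmem b hb).1
          exact sigmaPos_inj hjIcc (hVmem a ha).1 (hVmem b hb).1 (by omega)
      rw [← Finset.mul_sum, ← Finset.sum_div, hrank, div_self htne, mul_one]
    rw [hLHS, hRHS, Finset.mul_sum]
    refine Finset.sum_congr rfl fun j hj => ?_
    rw [mul_one_div]
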